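/- (Lemma 1) For all 1 ≤ j < i ≤ d one has (1 − t_1 t_1^* − ⋯ − t_j t_j^*) a_i^{(j)} = a_i^{(j+1)}, i.e. P_j a_i^{(j)} = a_i^{(j+1)}. -/
import Mathlib


/-- **Lemma 1.** For `1 ≤ j < i ≤ d`,
`(1 - t₁t₁* - ⋯ - tⱼtⱼ*) aᵢ⁽ʲ⁾ = aᵢ⁽ʲ⁺¹⁾`, i.e. `P j * aᵢ⁽ʲ⁾ = aᵢ⁽ʲ⁺¹⁾`. -/
theorem P_mul_a_lemma1 {A : Type*} [CStarAlgebra A] [PartialOrder A] [StarOrderedRing A]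
    {d : ℕ} (hd : 0 < d) {μ : ℝ} (hμ₁ : -1 < μ) (hμ₂ : μ < 1)
    (t T P : ℕ → A) (a : ℕ → ℕ → A)
    (rel1 : ∀ i j, 1 ≤ i → i ≤ d → 1 ≤ j → j ≤ d → i ≠ j → star (t i) * t j = 0)
    (rel2 : ∀ i, 1 ≤ i → i ≤ d →
      star (t i) * t i = 1 - ∑ k ∈ Finset.Ico 1 i, t k * star (t k))
    (rel3 : ∀ i j, 1 ≤ i → i < j → j ≤ d → t j * t i = 0)
    (hP : ∀ j, P j = 1 - ∑ k ∈ Finset.Icc 1 j, t k * star (t k))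
    (hTpos : ∀ i, 1 ≤ i → i ≤ d → 0 ≤ T i)
    (hTsq : ∀ i, 1 ≤ i → i ≤ d →
      HasSum (fun n : ℕ => μ ^ (2 * n) • ((t i) ^ (n + 1) * star ((t i) ^ (n + 1))))
        (T i ^ 2))
    (haii : ∀ i, 1 ≤ i → i ≤ d → a i i = T i * t i)
    (haij : ∀ i j, 1 ≤ j → j < i → i ≤ d →
      HasSum (fun n : ℕ => μ ^ n • ((t j) ^ n * a i (j + 1) * star ((t j) ^ n)))
        (a i j)) :
    ∀ i j, 1 ≤ j → j < i → i ≤ d → P j * a i j = a i (j + 1) := by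
  -- Key lemma: star (t k) * a i m = 0 for 1 ≤ k < m ≤ i ≤ d.
  have key : ∀ i c m k, i = m + c → 1 ≤ k → k < m → i ≤ d → star (t k) * a i m = 0 := by
    intro i c
    induction c with
    | zero =>
      intro m k him hk1 hkm hid
      have hm : m = i := by omega
      subst hm
      have hm1 : 1 ≤ m := le_trans hk1 hkm.le
      have hkd : k ≤ d := le_trans hkm.le hid
      have hkt : star (t k) * t m = 0 := rel1 k m hk1 hkd hm1 hid (Nat.ne_of_lt hkm)
      have h1 := (hTsq m hm1 hid).mul_left (star (t k))
      have h2 : (fun n : ℕ => star (t k) * (μ ^ (2 * n) • (t m ^ (n + 1) * star (t m ^ (n + 1)))))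
          = fun _ => (0 : A) := by
        funext n
        rw [mul_smul_comm, pow_succ' (t m) n, ← mul_assoc, ← mul_assoc, hkt, zero_mul, zero_mul,
          smul_zero]
      rw [h2] at h1
      have hT2 : star (t k) * T m ^ 2 = 0 := h1.unique hasSum_zero
      have hTsa : star (T m) = T m := (IsSelfAdjoint.of_nonneg (hTpos m hm1 hid)).star_eq
      have hT2k : T m ^ 2 * t k = 0 := by
        have h3 := congrArg star hT2
        simpa [star_mul, star_pow, hTsa] using h3
      have hTk : T m * t k = 0 := by
        have h3 : star (T m * t k) * (T m * t k) = 0 := by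
          rw [star_mul, hTsa, mul_assoc, ← mul_assoc (T m) (T m), ← pow_two, hT2k, mul_zero]
        exact (CStarRing.star_mul_self_eq_zero_iff _).mp h3
      have hkT : star (t k) * T m = 0 := by
        have h3 := congrArg star hTk
        simpa [star_mul, hTsa] using h3
      rw [haii m hm1 hid, ← mul_assoc, hkT, zero_mul]
    | succ c ih =>
      intro m k him hk1 hkm hid
      have hm1 : 1 ≤ m := le_trans hk1 hkm.le
      have hmi : m < i := by omega
      have h := (haij i m hm1 hmi hid).mul_left (star (t k))
      have h2 : (fun n : ℕ => star (t k) * (μ ^ n • (t m ^ n * a i (m + 1) * star (t m ^ n))))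
          = fun _ => (0 : A) := by
        funext n
        cases n with
        | zero =>
          simp [ih (m + 1) k (by omega) hk1 (by omega) hid]
        | succ n =>
          have hkt : star (t k) * t m = 0 :=
            rel1 k m hk1 (by omega) hm1 (by omega) (Nat.ne_of_lt hkm)
          rw [mul_smul_comm, pow_succ' (t m) n, ← mul_assoc, ← mul_assoc, ← mul_assoc, hkt,
            zero_mul, zero_mul, zero_mul, smul_zero]
      rw [h2] at h
      exact h.unique hasSum_zero
  intro i j hj1 hji hid
  have hjd : j ≤ d := by omega
  have hSa : (∑ k ∈ Finset.Ico 1 j, t k * star (t k)) * a i (j + 1) = 0 := by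
    rw [Finset.sum_mul]
    refine Finset.sum_eq_zero fun k hk => ?_
    rw [Finset.mem_Ico] at hk
    rw [mul_assoc, key i (i - (j + 1)) (j + 1) k (by omega) hk.1 (by omega) hid, mul_zero]
  have hStj : (∑ k ∈ Finset.Ico 1 j, t k * star (t k)) * t j = 0 := by
    rw [Finset.sum_mul]
    refine Finset.sum_eq_zero fun k hk => ?_
    rw [Finset.mem_Ico] at hk
    rw [mul_assoc, rel1 k j hk.1 (by omega) hj1 hjd (by omega), mul_zero]
  have hPa : P j * a i (j + 1) = a i (j + 1) := by
    rw [hP j, sub_mul, one_mul, Finset.sum_mul]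
    have h0 : ∑ k ∈ Finset.Icc 1 j, t k * star (t k) * a i (j + 1) = 0 := by
      refine Finset.sum_eq_zero fun k hk => ?_
      rw [Finset.mem_Icc] at hk
      rw [mul_assoc, key i (i - (j + 1)) (j + 1) k (by omega) hk.1 (by omega) hid, mul_zero]
    rw [h0, sub_zero]
  have hPtj : P j * t j = t j * ∑ k ∈ Finset.Ico 1 j, t k * star (t k) := by
    rw [hP j, sub_mul, one_mul, Finset.sum_mul]
    have hsingle : ∑ k ∈ Finset.Icc 1 j, t k * star (t k) * t j = t j * (star (t j) * t j) := by
      rw [Finset.sum_eq_single_of_mem j (Finset.mem_Icc.mpr ⟨hj1, le_refl j⟩), mul_assoc]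
      intro k hk hkj
      rw [Finset.mem_Icc] at hk
      rw [mul_assoc, rel1 k j hk.1 (by omega) hj1 hjd hkj, mul_zero]
    rw [hsingle, rel2 j hj1 hjd, mul_sub, mul_one, sub_sub_cancel]
  have hterm : ∀ n : ℕ, P j * (μ ^ n • (t j ^ n * a i (j + 1) * star (t j ^ n)))
      = if n = 0 then a i (j + 1) else 0 := by
    intro n
    cases n with
    | zero => simpa using hPa
    | succ n =>
      rw [if_neg (Nat.succ_ne_zero n), mul_smul_comm, pow_succ' (t j) n]
      have h0 : P j * (t j * t j ^ n * a i (j + 1) * star (t j * t j ^ n)) = 0 := by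
        have e1 : t j * t j ^ n * a i (j + 1) * star (t j * t j ^ n)
            = t j * (t j ^ n * a i (j + 1) * star (t j * t j ^ n)) := by
          simp only [mul_assoc]
        rw [e1, ← mul_assoc, hPtj, mul_assoc]
        have e2 : (∑ k ∈ Finset.Ico 1 j, t k * star (t k)) *
            (t j ^ n * a i (j + 1) * star (t j * t j ^ n)) = 0 := by
          cases n with
          | zero =>
            rw [pow_zero, one_mul, ← mul_assoc, hSa, zero_mul]
          | succ n =>
            rw [pow_succ' (t j) n]
            simp only [mul_assoc]
            rw [← mul_assoc, hStj, zero_mul]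
        rw [e2, mul_zero]
      rw [h0, smul_zero]
  have hsum := (haij i j hj1 hji hid).mul_left (P j)
  rw [funext hterm] at hsum
  exact hsum.unique (hasSum_ite_eq 0 (a i (j + 1)))
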